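/- For α ≥ -1/2 and all u > 0, |I_{α+1}(u) - I_α(u)| ≲ u^{-1} I_{α+1}(u), i.e. there exists a constant C (depending only on α) such that |I_{α+1}(u) - I_α(u)| ≤ C u^{-1} I_{α+1}(u) for all u > 0. -/

import Mathlib

set_option maxHeartbeats 1000000


open Real

/-- The modified Bessel function of the first kind of order `s`, via its power series. -/
noncomputable def besselI (s u : ℝ) : ℝ :=
  ∑' m : ℕ, (u / 2) ^ (2 * m) * (u / 2) ^ s / (Nat.factorial m * Real.Gamma (m + s + 1))

namespace BesselAux

open MeasureTheory intervalIntegral Filter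

/-- The `m`-th term of the Bessel series. -/
noncomputable def bterm (s u : ℝ) (m : ℕ) : ℝ :=
  (u / 2) ^ (2 * m) * (u / 2) ^ s / (Nat.factorial m * Real.Gamma (m + s + 1))

lemma besselI_eq_tsum (s u : ℝ) : besselI s u = ∑' m, bterm s u m := rfl

lemma bterm_pos {s u : ℝ} (hs : -1 < s) (hu : 0 < u) (m : ℕ) : 0 < bterm s u m := by
  have h2 : (0:ℝ) < u / 2 := by linarith
  have hg : 0 < Real.Gamma (m + s + 1) := by
    apply Real.Gamma_pos_of_pos
    have : (0:ℝ) ≤ m := Nat.cast_nonneg m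
    linarith
  exact div_pos (mul_pos (pow_pos h2 _) (Real.rpow_pos_of_pos h2 _))
    (mul_pos (by positivity) hg)

lemma bterm_succ {s u : ℝ} (hs : -1 < s) (hu : 0 < u) (m : ℕ) :
    bterm s u (m + 1) = bterm s u m * ((u / 2) ^ 2 / ((m + 1) * (m + s + 1))) := by
  have hm0 : (0:ℝ) ≤ m := Nat.cast_nonneg m
  have hms : (0:ℝ) < (m:ℝ) + s + 1 := by linarith
  have hΓ : Real.Gamma ((m:ℝ) + 1 + s + 1) = ((m:ℝ) + s + 1) * Real.Gamma ((m:ℝ) + s + 1) := by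
    rw [show (m:ℝ) + 1 + s + 1 = ((m:ℝ) + s + 1) + 1 by ring, Real.Gamma_add_one hms.ne']
  have hΓpos : 0 < Real.Gamma ((m:ℝ) + s + 1) := Real.Gamma_pos_of_pos hms
  have hfac : (0:ℝ) < (Nat.factorial m : ℝ) := by positivity
  simp only [bterm, Nat.factorial_succ]
  push_cast
  rw [hΓ, show 2 * (m + 1) = 2 * m + 2 by ring, pow_add]
  field_simp

lemma summable_bterm {s u : ℝ} (hs : -1 < s) (hu : 0 < u) : Summable (bterm s u) := by
  apply summable_of_ratio_norm_eventually_le (r := 1/2) (by norm_num)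
  rw [Filter.eventually_atTop]
  refine ⟨⌈u^2⌉₊ + ⌈|s|⌉₊, fun n hn => ?_⟩
  have h1 : ((⌈u^2⌉₊ : ℝ) + (⌈|s|⌉₊ : ℝ)) ≤ (n:ℝ) := by
    exact_mod_cast Nat.cast_le.mpr hn
  have hu2 : (u:ℝ)^2 ≤ (⌈u^2⌉₊ : ℝ) := Nat.le_ceil _
  have hssn : |s| ≤ (⌈|s|⌉₊ : ℝ) := Nat.le_ceil _
  have hs1 : -s ≤ |s| := neg_le_abs s
  have hceil0 : (0:ℝ) ≤ (⌈|s|⌉₊ : ℝ) := Nat.cast_nonneg _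
  have hceil1 : (0:ℝ) ≤ (⌈u^2⌉₊ : ℝ) := Nat.cast_nonneg _
  have hn1 : u^2 ≤ (n:ℝ) + 1 := by linarith
  have hn2 : (1:ℝ) ≤ (n:ℝ) + s + 1 := by linarith
  have hnn : (0:ℝ) < (n:ℝ) + 1 := by positivity
  have hratio : (u/2)^2 / (((n:ℝ) + 1) * ((n:ℝ) + s + 1)) ≤ 1/2 := by
    rw [div_le_iff₀ (by nlinarith)]
    nlinarith
  have hpos := bterm_pos hs hu n
  have hpos1 := bterm_pos hs hu (n+1)
  rw [Real.norm_eq_abs, Real.norm_eq_abs, abs_of_pos hpos, abs_of_pos hpos1,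
    bterm_succ hs hu n]
  calc bterm s u n * ((u/2)^2 / (((n:ℝ) + 1) * ((n:ℝ) + s + 1))) ≤ bterm s u n * (1/2) :=
        mul_le_mul_of_nonneg_left hratio hpos.le
    _ = 1/2 * bterm s u n := by ring

lemma besselI_pos {s u : ℝ} (hs : -1 < s) (hu : 0 < u) : 0 < besselI s u := by
  rw [besselI_eq_tsum]
  exact Summable.tsum_pos (summable_bterm hs hu) (fun m => (bterm_pos hs hu m).le) 0 (bterm_pos hs hu 0)

/-- Three-term recurrence. -/
lemma besselI_recurrence {s u : ℝ} (hs : -1 < s) (hu : 0 < u) :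
    besselI s u = 2 * (s + 1) / u * besselI (s + 1) u + besselI (s + 2) u := by
  have hb := summable_bterm hs hu
  have hs1 : (-1:ℝ) < s + 1 := by linarith
  have hs2 : (-1:ℝ) < s + 2 := by linarith
  have hden : ∀ m : ℕ, (0:ℝ) < (m:ℝ) + s + 1 := fun m => by
    have : (0:ℝ) ≤ m := Nat.cast_nonneg m; linarith
  set p : ℕ → ℝ := fun m => bterm s u m * ((s + 1) / ((m:ℝ) + s + 1)) with hp_def
  set q : ℕ → ℝ := fun m => bterm s u m * ((m:ℝ) / ((m:ℝ) + s + 1)) with hq_def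
  have hpq : ∀ m, bterm s u m = p m + q m := by
    intro m
    have h := (hden m).ne'
    simp only [hp_def, hq_def]
    rw [← mul_add, ← add_div, show s + 1 + (m:ℝ) = (m:ℝ) + s + 1 by ring, div_self h, mul_one]
  have hp_nonneg : ∀ m, 0 ≤ p m := fun m =>
    mul_nonneg (bterm_pos hs hu m).le (div_nonneg (by linarith) (hden m).le)
  have hq_nonneg : ∀ m, 0 ≤ q m := fun m =>
    mul_nonneg (bterm_pos hs hu m).le (div_nonneg (Nat.cast_nonneg m) (hden m).le)
  have hp_le : ∀ m, p m ≤ bterm s u m := by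
    intro m
    have h : (s + 1) / ((m:ℝ) + s + 1) ≤ 1 := by
      rw [div_le_one (hden m)]
      have : (0:ℝ) ≤ m := Nat.cast_nonneg m; linarith
    calc p m ≤ bterm s u m * 1 := mul_le_mul_of_nonneg_left h (bterm_pos hs hu m).le
      _ = bterm s u m := mul_one _
  have hq_le : ∀ m, q m ≤ bterm s u m := by
    intro m
    have h : (m:ℝ) / ((m:ℝ) + s + 1) ≤ 1 := by
      rw [div_le_one (hden m)]; linarith
    calc q m ≤ bterm s u m * 1 := mul_le_mul_of_nonneg_left h (bterm_pos hs hu m).le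
      _ = bterm s u m := mul_one _
  have hp_sum : Summable p := hb.of_nonneg_of_le hp_nonneg hp_le
  have hq_sum : Summable q := hb.of_nonneg_of_le hq_nonneg hq_le
  have hA : ∀ m, p m = 2 * (s + 1) / u * bterm (s + 1) u m := by
    intro m
    have hΓ : Real.Gamma ((m:ℝ) + (s + 1) + 1) = ((m:ℝ) + s + 1) * Real.Gamma ((m:ℝ) + s + 1) := by
      rw [show (m:ℝ) + (s + 1) + 1 = ((m:ℝ) + s + 1) + 1 by ring, Real.Gamma_add_one (hden m).ne']
    have hΓpos : 0 < Real.Gamma ((m:ℝ) + s + 1) := Real.Gamma_pos_of_pos (hden m)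
    have hrpow : (u/2:ℝ) ^ (s + 1) = (u/2) ^ s * (u/2) := Real.rpow_add_one (by positivity) s
    have hfac : (0:ℝ) < (Nat.factorial m : ℝ) := by positivity
    simp only [hp_def, bterm, hΓ, hrpow]
    rw [div_mul_div_comm, div_mul_div_comm]
    rw [div_eq_div_iff ((mul_pos (mul_pos hfac hΓpos) (hden m)).ne')
      ((mul_pos hu (mul_pos hfac (mul_pos (hden m) hΓpos))).ne')]
    ring
  have hB : ∀ m, q (m + 1) = bterm (s + 2) u m := by
    intro m
    have hm0 : (0:ℝ) ≤ m := Nat.cast_nonneg m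
    have hm1 : (0:ℝ) < (m:ℝ) + s + 2 := by linarith
    have e1 : Real.Gamma (((m:ℝ) + s + 1) + 1) = ((m:ℝ) + s + 1) * Real.Gamma ((m:ℝ) + s + 1) :=
      Real.Gamma_add_one (hden m).ne'
    have e2 : Real.Gamma ((((m:ℝ) + s + 1) + 1) + 1)
        = (((m:ℝ) + s + 1) + 1) * Real.Gamma (((m:ℝ) + s + 1) + 1) :=
      Real.Gamma_add_one (by linarith)
    have hΓ2 : Real.Gamma ((m:ℝ) + (s + 2) + 1)
        = ((m:ℝ) + s + 2) * (((m:ℝ) + s + 1) * Real.Gamma ((m:ℝ) + s + 1)) := by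
      rw [show (m:ℝ) + (s + 2) + 1 = (((m:ℝ) + s + 1) + 1) + 1 by ring, e2, e1]
      ring
    have hΓpos : 0 < Real.Gamma ((m:ℝ) + s + 1) := Real.Gamma_pos_of_pos (hden m)
    have hrpow : (u/2:ℝ) ^ (s + 2) = (u/2) ^ s * ((u/2) * (u/2)) := by
      rw [show s + (2:ℝ) = (s + 1) + 1 by ring, Real.rpow_add_one (by positivity),
        Real.rpow_add_one (by positivity)]
      ring
    have hfac : (0:ℝ) < (Nat.factorial m : ℝ) := by positivity
    have hq1 : q (m + 1) = bterm s u m * ((u/2)^2 / (((m:ℝ) + 1) * ((m:ℝ) + s + 1)))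
        * (((m:ℝ) + 1) / ((m:ℝ) + 1 + s + 1)) := by
      simp only [hq_def, bterm_succ hs hu m]
      push_cast
      ring
    have hb1' : (0:ℝ) < (m:ℝ) + 1 := by linarith
    have hb2' : (0:ℝ) < (m:ℝ) + 1 + s + 1 := by linarith
    rw [hq1]
    simp only [bterm, hΓ2, hrpow]
    rw [div_mul_div_comm, div_mul_div_comm]
    rw [div_eq_div_iff
      ((mul_pos (mul_pos (mul_pos hfac hΓpos) (mul_pos hb1' (hden m))) hb2').ne')
      ((mul_pos hfac (mul_pos hm1 (mul_pos (hden m) hΓpos))).ne')]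
    ring
  calc besselI s u = ∑' m, (p m + q m) := by
        rw [besselI_eq_tsum]; exact tsum_congr hpq
    _ = (∑' m, p m) + ∑' m, q m := Summable.tsum_add hp_sum hq_sum
    _ = 2 * (s + 1) / u * besselI (s + 1) u + besselI (s + 2) u := by
        congr 1
        · rw [besselI_eq_tsum, ← tsum_mul_left]
          exact tsum_congr hA
        · have hq0 : q 0 = 0 := by simp [hq_def]
          rw [Summable.tsum_eq_zero_add hq_sum, hq0, zero_add, besselI_eq_tsum]
          exact tsum_congr hB

lemma wcont {p : ℝ} (hp : 0 ≤ p) : Continuous fun t : ℝ => (1 - t ^ 2) ^ p :=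
  (continuous_const.sub (continuous_pow 2)).rpow_const (fun _ => Or.inr hp)

/-- Real Beta integral. -/
lemma realBeta {a b : ℝ} (ha : 0 < a) (hb : 0 < b) :
    ∫ x in (0:ℝ)..1, x ^ (a - 1) * (1 - x) ^ (b - 1) =
      Real.Gamma a * Real.Gamma b / Real.Gamma (a + b) := by
  have h := Complex.Gamma_mul_Gamma_eq_betaIntegral
    (s := (a:ℂ)) (t := (b:ℂ)) (by simpa using ha) (by simpa using hb)
  have hcoe : Complex.betaIntegral (a:ℂ) (b:ℂ)
      = ((∫ x in (0:ℝ)..1, x ^ (a - 1) * (1 - x) ^ (b - 1) : ℝ) : ℂ) := by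
    rw [Complex.betaIntegral, ← intervalIntegral.integral_ofReal]
    refine intervalIntegral.integral_congr fun x hx => ?_
    rw [Set.uIcc_of_le (by norm_num : (0:ℝ) ≤ 1)] at hx
    obtain ⟨hx0, hx1⟩ := hx
    push_cast
    rw [Complex.ofReal_cpow hx0, Complex.ofReal_cpow (by linarith : (0:ℝ) ≤ 1 - x)]
    push_cast
    ring
  rw [hcoe, ← Complex.ofReal_add] at h
  rw [Complex.Gamma_ofReal, Complex.Gamma_ofReal, Complex.Gamma_ofReal,
    ← Complex.ofReal_mul, ← Complex.ofReal_mul] at h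
  have h' : Real.Gamma a * Real.Gamma b
      = Real.Gamma (a + b) * ∫ x in (0:ℝ)..1, x ^ (a - 1) * (1 - x) ^ (b - 1) :=
    Complex.ofReal_inj.mp h
  have hab : Real.Gamma (a + b) ≠ 0 := (Real.Gamma_pos_of_pos (by linarith)).ne'
  rw [h']
  field_simp

/-- Even moments of `(1-t²)^p` on `[-1,1]`. -/
lemma momentEven {p : ℝ} (hp : 0 ≤ p) (m : ℕ) :
    ∫ t in (-1:ℝ)..1, t ^ (2 * m) * (1 - t ^ 2) ^ p =
      Real.Gamma (m + 1/2) * Real.Gamma (p + 1) / Real.Gamma (m + p + 3/2) := by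
  have hcont : Continuous fun t : ℝ => t ^ (2 * m) * (1 - t ^ 2) ^ p :=
    (continuous_pow _).mul (wcont hp)
  -- symmetry: integral over [-1,1] is twice integral over [0,1]
  have hsplit : (∫ t in (-1:ℝ)..0, t ^ (2*m) * (1 - t^2) ^ p)
      + (∫ t in (0:ℝ)..1, t ^ (2*m) * (1 - t^2) ^ p)
      = ∫ t in (-1:ℝ)..1, t ^ (2*m) * (1 - t^2) ^ p :=
    intervalIntegral.integral_add_adjacent_intervals
      (hcont.intervalIntegrable _ _) (hcont.intervalIntegrable _ _)
  have hneg : (∫ t in (-1:ℝ)..0, t ^ (2*m) * (1 - t^2) ^ p)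
      = ∫ t in (0:ℝ)..1, t ^ (2*m) * (1 - t^2) ^ p := by
    have h2 : (∫ x in (0:ℝ)..1, (-x) ^ (2*m) * (1 - (-x)^2) ^ p)
        = ∫ x in (-1:ℝ)..(-0:ℝ), x ^ (2*m) * (1 - x^2) ^ p :=
      intervalIntegral.integral_comp_neg (fun x => x ^ (2*m) * (1 - x^2) ^ p)
    rw [neg_zero] at h2
    rw [← h2]
    refine intervalIntegral.integral_congr fun x _ => ?_
    rw [Even.neg_pow ⟨m, by ring⟩, neg_sq]
  -- substitution x = t² on [0,1]
  have himg : (fun t : ℝ => t ^ 2) '' Set.Ioo 0 1 = Set.Ioo 0 1 := by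
    ext x
    simp only [Set.mem_image, Set.mem_Ioo]
    constructor
    · rintro ⟨t, ⟨ht0, ht1⟩, rfl⟩
      exact ⟨by positivity, by nlinarith⟩
    · rintro ⟨hx0, hx1⟩
      exact ⟨Real.sqrt x, ⟨Real.sqrt_pos.mpr hx0, by
        have := Real.sqrt_lt_sqrt hx0.le hx1
        simpa using this⟩, Real.sq_sqrt hx0.le⟩
  have hsub : ∫ x in Set.Ioo (0:ℝ) 1, x ^ ((m:ℝ) - 1/2) * (1 - x) ^ p
      = ∫ t in Set.Ioo (0:ℝ) 1, |2 * t| • ((t^2) ^ ((m:ℝ) - 1/2) * (1 - t^2) ^ p) := by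
    conv_lhs => rw [← himg]
    refine MeasureTheory.integral_image_eq_integral_abs_deriv_smul (f' := fun t => 2 * t)
      (g := fun x => x ^ ((m:ℝ) - 1/2) * (1 - x) ^ p) measurableSet_Ioo
      (fun t _ => ?_) (fun a ha b hb hab => ?_)
    · simpa using (hasDerivAt_pow 2 t).hasDerivWithinAt
    · obtain ⟨ha0, -⟩ := ha
      obtain ⟨hb0, -⟩ := hb
      have hab' : a ^ 2 = b ^ 2 := hab
      have h : (a - b) * (a + b) = 0 := by
        have hh : (a - b) * (a + b) = a ^ 2 - b ^ 2 := by ring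
        rw [hh, hab']; ring
      rcases mul_eq_zero.mp h with h1 | h2
      · linarith
      · linarith
  have hcongr : ∀ t ∈ Set.Ioo (0:ℝ) 1,
      |2 * t| • ((t^2) ^ ((m:ℝ) - 1/2) * (1 - t^2) ^ p) = 2 * (t ^ (2*m) * (1 - t^2) ^ p) := by
    intro t ⟨ht0, ht1⟩
    have h1 : ((t:ℝ)^2) ^ ((m:ℝ) - 1/2) = t ^ (2 * ((m:ℝ) - 1/2)) := by
      rw [← Real.rpow_natCast t 2, ← Real.rpow_mul ht0.le]
      norm_num [mul_comm]
    have h2 : t * t ^ (2 * ((m:ℝ) - 1/2)) = t ^ (2*m : ℕ) := by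
      rw [← Real.rpow_natCast t (2*m)]
      nth_rewrite 1 [← Real.rpow_one t]
      rw [← Real.rpow_add ht0]
      congr 1
      push_cast
      ring
    rw [abs_of_pos (by linarith : (0:ℝ) < 2 * t), smul_eq_mul, h1]
    calc 2 * t * (t ^ (2 * ((m:ℝ) - 1/2)) * (1 - t^2) ^ p)
        = 2 * ((t * t ^ (2 * ((m:ℝ) - 1/2))) * (1 - t^2) ^ p) := by ring
      _ = 2 * (t ^ (2*m) * (1 - t^2) ^ p) := by rw [h2]
  have hIoo : ∫ t in (0:ℝ)..1, t ^ (2*m) * (1 - t^2) ^ p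
      = ∫ t in Set.Ioo (0:ℝ) 1, t ^ (2*m) * (1 - t^2) ^ p := by
    rw [intervalIntegral.integral_of_le (by norm_num : (0:ℝ) ≤ 1),
      MeasureTheory.integral_Ioc_eq_integral_Ioo]
  have hbeta : ∫ x in Set.Ioo (0:ℝ) 1, x ^ ((m:ℝ) - 1/2) * (1 - x) ^ p
      = Real.Gamma ((m:ℝ) + 1/2) * Real.Gamma (p + 1) / Real.Gamma ((m:ℝ) + 1/2 + (p+1)) := by
    rw [← realBeta (by positivity : (0:ℝ) < (m:ℝ) + 1/2) (by linarith : (0:ℝ) < p + 1),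
      intervalIntegral.integral_of_le (by norm_num : (0:ℝ) ≤ 1),
      MeasureTheory.integral_Ioc_eq_integral_Ioo]
    exact MeasureTheory.setIntegral_congr_fun measurableSet_Ioo fun x _ => by
      rw [show (m:ℝ)+1/2-1 = (m:ℝ)-1/2 by ring, show p+1-1 = p by ring]
  calc ∫ t in (-1:ℝ)..1, t ^ (2*m) * (1 - t^2) ^ p
      = 2 * ∫ t in Set.Ioo (0:ℝ) 1, t ^ (2*m) * (1 - t^2) ^ p := by
        rw [← hsplit, hneg, hIoo]; ring
    _ = ∫ t in Set.Ioo (0:ℝ) 1, 2 * (t ^ (2*m) * (1 - t^2) ^ p) := by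
        rw [MeasureTheory.integral_const_mul]
    _ = ∫ x in Set.Ioo (0:ℝ) 1, x ^ ((m:ℝ) - 1/2) * (1 - x) ^ p := by
        rw [hsub]
        exact (MeasureTheory.setIntegral_congr_fun measurableSet_Ioo
          (fun t ht => (hcongr t ht))).symm
    _ = Real.Gamma (m + 1/2) * Real.Gamma (p + 1) / Real.Gamma (m + p + 3/2) := by
        rw [hbeta]
        congr 2
        ring

/-- Odd moments vanish. -/
lemma momentOdd {p : ℝ} (hp : 0 ≤ p) (m : ℕ) :
    ∫ t in (-1:ℝ)..1, t ^ (2 * m + 1) * (1 - t ^ 2) ^ p = 0 := by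
  have hcont : Continuous fun t : ℝ => t ^ (2 * m + 1) * (1 - t ^ 2) ^ p :=
    (continuous_pow _).mul (wcont hp)
  have hsplit : (∫ t in (-1:ℝ)..0, t ^ (2*m+1) * (1 - t^2) ^ p)
      + (∫ t in (0:ℝ)..1, t ^ (2*m+1) * (1 - t^2) ^ p)
      = ∫ t in (-1:ℝ)..1, t ^ (2*m+1) * (1 - t^2) ^ p :=
    intervalIntegral.integral_add_adjacent_intervals
      (hcont.intervalIntegrable _ _) (hcont.intervalIntegrable _ _)
  have hneg : (∫ t in (-1:ℝ)..0, t ^ (2*m+1) * (1 - t^2) ^ p)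
      = - ∫ t in (0:ℝ)..1, t ^ (2*m+1) * (1 - t^2) ^ p := by
    have h2 : (∫ x in (0:ℝ)..1, (-x) ^ (2*m+1) * (1 - (-x)^2) ^ p)
        = ∫ x in (-1:ℝ)..(-0:ℝ), x ^ (2*m+1) * (1 - x^2) ^ p :=
      intervalIntegral.integral_comp_neg (fun x => x ^ (2*m+1) * (1 - x^2) ^ p)
    rw [neg_zero] at h2
    rw [← h2]
    rw [show (∫ x in (0:ℝ)..1, (-x) ^ (2*m+1) * (1 - (-x)^2) ^ p)
        = ∫ x in (0:ℝ)..1, -(x ^ (2*m+1) * (1 - x^2) ^ p) from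
      intervalIntegral.integral_congr fun x _ => by
        rw [Odd.neg_pow ⟨m, by ring⟩, neg_sq]; ring]
    rw [intervalIntegral.integral_neg]
  rw [← hsplit, hneg]
  ring

/-- Interchange of sum and integral. -/
lemma interchange {p u : ℝ} (hp : 0 ≤ p) (hu : 0 < u) (k : ℕ) :
    ∫ t in (-1:ℝ)..1, Real.exp (u * t) * t ^ k * (1 - t ^ 2) ^ p =
      ∑' n : ℕ, (u ^ n / Nat.factorial n) * ∫ t in (-1:ℝ)..1, t ^ (n + k) * (1 - t ^ 2) ^ p := by
  have hle : (-1:ℝ) ≤ 1 := by norm_num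
  set F : ℕ → ℝ → ℝ := fun n t => (u ^ n / Nat.factorial n) * (t ^ (n + k) * (1 - t ^ 2) ^ p)
    with hF
  have hFcont : ∀ n, Continuous (F n) := fun n =>
    continuous_const.mul ((continuous_pow _).mul (wcont hp))
  have hFint : ∀ n, MeasureTheory.IntegrableOn (F n) (Set.Ioc (-1:ℝ) 1) := fun n =>
    ((hFcont n).integrableOn_Icc).mono_set Set.Ioc_subset_Icc_self
  have hbound : ∀ n, ∀ t ∈ Set.Ioc (-1:ℝ) 1, ‖F n t‖ ≤ u ^ n / Nat.factorial n := by
    intro n t ht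
    have ht1 : |t| ≤ 1 := abs_le.mpr ⟨ht.1.le, ht.2⟩
    have ht2 : t ^ 2 ≤ 1 := by
      have := abs_le.mp ht1
      nlinarith
    have hw0 : (0:ℝ) ≤ 1 - t ^ 2 := by linarith
    have hwle : (1 - t ^ 2) ^ p ≤ 1 := Real.rpow_le_one hw0 (by nlinarith [sq_nonneg t]) hp
    have hwpos : 0 ≤ (1 - t ^ 2) ^ p := Real.rpow_nonneg hw0 _
    have htpow : |t ^ (n + k)| ≤ 1 := by
      rw [abs_pow]; exact pow_le_one₀ (abs_nonneg t) ht1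
    have hun : 0 ≤ u ^ n / (Nat.factorial n : ℝ) := by positivity
    simp only [hF, norm_mul, Real.norm_eq_abs, abs_of_nonneg hun]
    rw [abs_of_nonneg hwpos]
    calc u ^ n / (Nat.factorial n : ℝ) * (|t ^ (n + k)| * (1 - t ^ 2) ^ p)
        ≤ u ^ n / (Nat.factorial n : ℝ) * (1 * 1) := by
          apply mul_le_mul_of_nonneg_left _ hun
          exact mul_le_mul htpow hwle hwpos (by norm_num)
      _ = u ^ n / (Nat.factorial n : ℝ) := by ring
  have hnorm_int : ∀ n, (∫ t in Set.Ioc (-1:ℝ) 1, ‖F n t‖) ≤ 2 * (u ^ n / Nat.factorial n) := by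
    intro n
    have hconst : MeasureTheory.IntegrableOn (fun _ : ℝ => u ^ n / (Nat.factorial n : ℝ))
        (Set.Ioc (-1:ℝ) 1) := (MeasureTheory.integrableOn_const_iff).mpr
      (Or.inr (by rw [Real.volume_Ioc]; exact ENNReal.ofReal_lt_top))
    have h1 := MeasureTheory.setIntegral_mono_on (hFint n).norm hconst
      measurableSet_Ioc (hbound n)
    rw [MeasureTheory.setIntegral_const] at h1
    rw [MeasureTheory.measureReal_def, Real.volume_Ioc] at h1
    simp only [smul_eq_mul] at h1
    calc (∫ t in Set.Ioc (-1:ℝ) 1, ‖F n t‖)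
        ≤ (ENNReal.ofReal (1 - (-1:ℝ))).toReal * (u ^ n / Nat.factorial n) := h1
      _ = 2 * (u ^ n / Nat.factorial n) := by norm_num
  have hsum_norm : Summable fun n => ∫ t in Set.Ioc (-1:ℝ) 1, ‖F n t‖ :=
    Summable.of_nonneg_of_le
      (fun n => MeasureTheory.integral_nonneg fun t => norm_nonneg _)
      hnorm_int ((Real.summable_pow_div_factorial u).mul_left 2)
  have hkey : ∑' n, ∫ t in Set.Ioc (-1:ℝ) 1, F n t = ∫ t in Set.Ioc (-1:ℝ) 1, ∑' n, F n t :=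
    MeasureTheory.integral_tsum_of_summable_integral_norm (fun n => hFint n) hsum_norm
  have hpt : ∀ t : ℝ, ∑' n, F n t = Real.exp (u * t) * t ^ k * (1 - t ^ 2) ^ p := by
    intro t
    have hexp : Real.exp (u * t) = ∑' n, (u * t) ^ n / Nat.factorial n := by
      rw [Real.exp_eq_exp_ℝ, NormedSpace.exp_eq_tsum_div]
    have hterm : ∀ n, F n t = ((u * t) ^ n / Nat.factorial n) * (t ^ k * (1 - t ^ 2) ^ p) := by
      intro n
      simp only [hF]
      rw [mul_pow, pow_add]
      ring
    rw [tsum_congr hterm, tsum_mul_right, ← hexp]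
    ring
  rw [intervalIntegral.integral_of_le hle]
  have hstep : ∫ t in Set.Ioc (-1:ℝ) 1, Real.exp (u * t) * t ^ k * (1 - t ^ 2) ^ p
      = ∫ t in Set.Ioc (-1:ℝ) 1, ∑' n, F n t := by
    simp_rw [hpt]
  rw [hstep, ← hkey]
  refine tsum_congr fun n => ?_
  rw [intervalIntegral.integral_of_le hle, hF]
  exact MeasureTheory.integral_const_mul _ _

/-- `Γ(m+1/2) · m! · 4^m = √π · (2m)!`. -/
lemma Gamma_half_fact (m : ℕ) :
    Real.Gamma (m + 1/2) * (Nat.factorial m : ℝ) * 2 ^ (2*m) = Real.sqrt π * (Nat.factorial (2*m) : ℝ) := by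
  have h := Real.Gamma_mul_Gamma_add_half ((m:ℝ) + 1/2)
  rw [show (m:ℝ) + 1/2 + 1/2 = (m:ℝ) + 1 by ring] at h
  rw [show 2 * ((m:ℝ) + 1/2) = ((2*m : ℕ):ℝ) + 1 by push_cast; ring] at h
  rw [show (1:ℝ) - (((2*m : ℕ):ℝ) + 1) = -((2*m : ℕ):ℝ) by push_cast; ring] at h
  rw [Real.Gamma_nat_eq_factorial, Real.Gamma_nat_eq_factorial] at h
  rw [Real.rpow_neg (by norm_num : (0:ℝ) ≤ 2), Real.rpow_natCast] at h
  have h2 : ((2:ℝ) ^ (2*m)) ≠ 0 := by positivity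
  rw [h]
  field_simp

/-- `Γ(m+3/2) · m! · 2^(2m+1) = √π · (2m+1)!`. -/
lemma Gamma_half_fact' (m : ℕ) :
    Real.Gamma (m + 1/2 + 1) * (Nat.factorial m : ℝ) * 2 ^ (2*m+1)
      = Real.sqrt π * (Nat.factorial (2*m+1) : ℝ) := by
  have h := Real.Gamma_mul_Gamma_add_half ((m:ℝ) + 1)
  rw [show 2 * ((m:ℝ) + 1) = ((2*m+1 : ℕ):ℝ) + 1 by push_cast; ring] at h
  rw [show (1:ℝ) - (((2*m+1 : ℕ):ℝ) + 1) = -((2*m+1 : ℕ):ℝ) by push_cast; ring] at h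
  rw [Real.Gamma_nat_eq_factorial, Real.Gamma_nat_eq_factorial] at h
  rw [Real.rpow_neg (by norm_num : (0:ℝ) ≤ 2), Real.rpow_natCast] at h
  have h2 : ((2:ℝ) ^ (2*m+1)) ≠ 0 := by positivity
  rw [show (m:ℝ) + 1/2 + 1 = (m:ℝ) + 1 + 1/2 by ring]
  calc Real.Gamma ((m:ℝ) + 1 + 1/2) * (Nat.factorial m : ℝ) * 2 ^ (2*m+1)
      = (Real.Gamma ((m:ℝ) + 1) * Real.Gamma ((m:ℝ) + 1 + 1/2)) * 2 ^ (2*m+1) := by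
        rw [Real.Gamma_nat_eq_factorial]; ring
    _ = Real.sqrt π * (Nat.factorial (2*m+1) : ℝ) := by
        rw [Real.Gamma_nat_eq_factorial, h]
        field_simp

lemma momentBound {p : ℝ} (hp : 0 ≤ p) (j : ℕ) :
    |∫ t in (-1:ℝ)..1, t ^ j * (1 - t ^ 2) ^ p| ≤ 2 := by
  have h1 : |∫ t in (-1:ℝ)..1, t ^ j * (1 - t^2) ^ p|
      ≤ ∫ t in (-1:ℝ)..1, |t ^ j * (1 - t^2) ^ p| :=
    intervalIntegral.abs_integral_le_integral_abs (by norm_num)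
  have h2 : (∫ t in (-1:ℝ)..1, |t ^ j * (1 - t^2) ^ p|) ≤ ∫ t in (-1:ℝ)..1, (1:ℝ) := by
    apply intervalIntegral.integral_mono_on (by norm_num)
    · exact (((continuous_pow j).mul (wcont hp)).abs).intervalIntegrable _ _
    · exact intervalIntegrable_const
    · intro t ht
      rw [Set.mem_Icc] at ht
      have ht1 : |t| ≤ 1 := abs_le.mpr ⟨by linarith [ht.1], ht.2⟩
      have ht2 : t ^ 2 ≤ 1 := by nlinarith [abs_le.mp ht1]
      have hw0 : (0:ℝ) ≤ 1 - t ^ 2 := by linarith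
      have hwle : (1 - t^2) ^ p ≤ 1 := Real.rpow_le_one hw0 (by nlinarith [sq_nonneg t]) hp
      have hwpos : 0 ≤ (1 - t^2) ^ p := Real.rpow_nonneg hw0 _
      rw [abs_mul, abs_of_nonneg hwpos, abs_pow]
      calc |t| ^ j * (1 - t^2) ^ p ≤ 1 * 1 :=
            mul_le_mul (pow_le_one₀ (abs_nonneg t) ht1) hwle hwpos (by norm_num)
        _ = 1 := by norm_num
  have h3 : (∫ t in (-1:ℝ)..1, (1:ℝ)) = 2 := by
    rw [intervalIntegral.integral_const]; norm_num
  linarith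

/-- Poisson representation of `I_ν`, `ν = p + 1/2`, `p ≥ 0`. -/
lemma repA {p u : ℝ} (hp : 0 ≤ p) (hu : 0 < u) :
    besselI (p + 1/2) u * (Real.sqrt π * Real.Gamma (p + 1)) =
      (u / 2) ^ (p + 1/2) * ∫ t in (-1:ℝ)..1, Real.exp (u * t) * (1 - t ^ 2) ^ p := by
  set ν : ℝ := p + 1/2 with hν
  set c : ℕ → ℝ := fun n => (u ^ n / Nat.factorial n) * ∫ t in (-1:ℝ)..1, t ^ (n + 0) * (1 - t ^ 2) ^ p
    with hc_def
  have h0 : ∫ t in (-1:ℝ)..1, Real.exp (u * t) * (1 - t ^ 2) ^ p = ∑' n, c n := by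
    rw [hc_def, ← interchange hp hu 0]
    refine intervalIntegral.integral_congr fun t _ => by rw [pow_zero, mul_one]
  have hc : Summable c := by
    apply Summable.of_norm_bounded ((Real.summable_pow_div_factorial u).mul_left 2)
    intro n
    rw [hc_def]
    rw [Real.norm_eq_abs, abs_mul,
      abs_of_nonneg (by positivity : (0:ℝ) ≤ u ^ n / (Nat.factorial n : ℝ))]
    calc u ^ n / (Nat.factorial n:ℝ) * |∫ t in (-1:ℝ)..1, t ^ (n+0) * (1-t^2)^p|
        ≤ u ^ n / (Nat.factorial n:ℝ) * 2 :=
          mul_le_mul_of_nonneg_left (momentBound hp (n+0)) (by positivity)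
      _ = 2 * (u ^ n / Nat.factorial n) := by ring
  have he : Summable (fun m => c (2 * m)) := hc.comp_injective fun a b h => by omega
  have ho : Summable (fun m => c (2 * m + 1)) := hc.comp_injective fun a b h => by omega
  have hodd : ∀ m : ℕ, c (2 * m + 1) = 0 := by
    intro m
    rw [hc_def]
    simp only [Nat.add_zero]
    rw [momentOdd hp m, mul_zero]
  have hterm : ∀ m : ℕ, bterm ν u m * (Real.sqrt π * Real.Gamma (p + 1))
      = (u / 2) ^ ν * c (2 * m) := by
    intro m
    rw [hc_def]
    simp only [Nat.add_zero]
    rw [momentEven hp m]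
    rw [bterm, hν]
    rw [show (m:ℝ) + (p + 1/2) + 1 = (m:ℝ) + p + 3/2 by ring]
    have hfact := Gamma_half_fact m
    set sp := Real.sqrt π with hsp
    set Γh := Real.Gamma ((m:ℝ) + 1/2) with hΓh
    set Γd := Real.Gamma ((m:ℝ) + p + 3/2) with hΓd
    set Γp1 := Real.Gamma (p + 1) with hΓp1
    set X := (u/2:ℝ) ^ (p + 1/2) with hX
    have hfacne : ((Nat.factorial m : ℝ)) ≠ 0 := by positivity
    have hfacne2 : ((Nat.factorial (2*m) : ℝ)) ≠ 0 := by positivity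
    have hΓne : Γd ≠ 0 := by
      rw [hΓd]
      have h0 : (0:ℝ) ≤ (m:ℝ) := Nat.cast_nonneg m
      exact (Real.Gamma_pos_of_pos (by linarith)).ne'
    have hΓh_eq : Γh = sp * (Nat.factorial (2*m) : ℝ) / ((Nat.factorial m : ℝ) * 2^(2*m)) := by
      rw [eq_div_iff (by positivity)]
      linear_combination hfact
    rw [hΓh_eq]
    field_simp
    have h2 : (1/2:ℝ)^(m*2) * 2^(m*2) = 1 := by rw [← mul_pow]; norm_num
    linear_combination (u^(m*2)*X*sp*Γp1) * h2
  calc besselI ν u * (Real.sqrt π * Real.Gamma (p + 1))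
      = ∑' m, (bterm ν u m * (Real.sqrt π * Real.Gamma (p + 1))) := by
        rw [besselI_eq_tsum, tsum_mul_right]
    _ = ∑' m, ((u / 2) ^ ν * c (2 * m)) := tsum_congr hterm
    _ = (u / 2) ^ ν * ∑' m, c (2 * m) := tsum_mul_left
    _ = (u / 2) ^ ν * ((∑' m, c (2 * m)) + ∑' m, c (2 * m + 1)) := by
        rw [show (∑' m, c (2 * m + 1)) = 0 from by simp [hodd], add_zero]
    _ = (u / 2) ^ ν * ∑' n, c n := by rw [tsum_even_add_odd he ho]
    _ = (u / 2) ^ ν * ∫ t in (-1:ℝ)..1, Real.exp (u * t) * (1 - t ^ 2) ^ p := by rw [← h0]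

/-- Weighted Poisson representation of `I_{ν+1}`, `ν = p + 1/2`, `p ≥ 0`. -/
lemma repB {p u : ℝ} (hp : 0 ≤ p) (hu : 0 < u) :
    besselI (p + 1/2 + 1) u * (Real.sqrt π * Real.Gamma (p + 1)) =
      (u / 2) ^ (p + 1/2) * ∫ t in (-1:ℝ)..1, Real.exp (u * t) * t * (1 - t ^ 2) ^ p := by
  set ν : ℝ := p + 1/2 with hν
  set c : ℕ → ℝ := fun n => (u ^ n / Nat.factorial n) * ∫ t in (-1:ℝ)..1, t ^ (n + 1) * (1 - t ^ 2) ^ p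
    with hc_def
  have h0 : ∫ t in (-1:ℝ)..1, Real.exp (u * t) * t * (1 - t ^ 2) ^ p = ∑' n, c n := by
    rw [hc_def, ← interchange hp hu 1]
    refine intervalIntegral.integral_congr fun t _ => by rw [pow_one]
  have hc : Summable c := by
    apply Summable.of_norm_bounded ((Real.summable_pow_div_factorial u).mul_left 2)
    intro n
    rw [hc_def]
    rw [Real.norm_eq_abs, abs_mul,
      abs_of_nonneg (by positivity : (0:ℝ) ≤ u ^ n / (Nat.factorial n : ℝ))]
    calc u ^ n / (Nat.factorial n:ℝ) * |∫ t in (-1:ℝ)..1, t ^ (n+1) * (1-t^2)^p|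
        ≤ u ^ n / (Nat.factorial n:ℝ) * 2 :=
          mul_le_mul_of_nonneg_left (momentBound hp (n+1)) (by positivity)
      _ = 2 * (u ^ n / Nat.factorial n) := by ring
  have he : Summable (fun m => c (2 * m)) := hc.comp_injective fun a b h => by omega
  have ho : Summable (fun m => c (2 * m + 1)) := hc.comp_injective fun a b h => by omega
  have heven : ∀ m : ℕ, c (2 * m) = 0 := by
    intro m
    rw [hc_def]
    simp only []
    rw [momentOdd hp m, mul_zero]
  have hterm : ∀ m : ℕ, bterm (ν + 1) u m * (Real.sqrt π * Real.Gamma (p + 1))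
      = (u / 2) ^ ν * c (2 * m + 1) := by
    intro m
    rw [hc_def]
    simp only []
    rw [show 2 * m + 1 + 1 = 2 * (m + 1) by ring, momentEven hp (m + 1)]
    rw [bterm, hν]
    rw [show (m:ℝ) + (p + 1/2 + 1) + 1 = ((m+1:ℕ):ℝ) + p + 3/2 by push_cast; ring]
    rw [show (((m+1:ℕ)):ℝ) + 1/2 = (m:ℝ) + 1/2 + 1 by push_cast; ring]
    have hrpow : (u/2:ℝ) ^ (p + 1/2 + 1) = (u/2) ^ (p + 1/2) * (u/2) :=
      Real.rpow_add_one (by positivity) _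
    rw [hrpow]
    have hfact := Gamma_half_fact' m
    set sp := Real.sqrt π with hsp
    set Γh := Real.Gamma ((m:ℝ) + 1/2 + 1) with hΓh
    set Γd := Real.Gamma (((m+1:ℕ):ℝ) + p + 3/2) with hΓd
    set Γp1 := Real.Gamma (p + 1) with hΓp1
    set X := (u/2:ℝ) ^ (p + 1/2) with hX
    have hfacne : ((Nat.factorial m : ℝ)) ≠ 0 := by positivity
    have hfacne2 : ((Nat.factorial (2*m+1) : ℝ)) ≠ 0 := by positivity
    have hΓne : Γd ≠ 0 := by
      rw [hΓd]
      have h0 : (0:ℝ) ≤ ((m+1:ℕ):ℝ) := Nat.cast_nonneg _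
      exact (Real.Gamma_pos_of_pos (by linarith)).ne'
    have hΓh_eq : Γh = sp * (Nat.factorial (2*m+1) : ℝ) / ((Nat.factorial m : ℝ) * 2^(2*m+1)) := by
      rw [eq_div_iff (by positivity)]
      linear_combination hfact
    rw [hΓh_eq]
    field_simp
    have h2 : (1/2:ℝ)^(m*2) * 2^(m*2) = 1 := by rw [← mul_pow]; norm_num
    linear_combination (u*u^(m*2)*X*sp*Γp1*2) * h2
  calc besselI (ν + 1) u * (Real.sqrt π * Real.Gamma (p + 1))
      = ∑' m, (bterm (ν + 1) u m * (Real.sqrt π * Real.Gamma (p + 1))) := by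
        rw [besselI_eq_tsum, tsum_mul_right]
    _ = ∑' m, ((u / 2) ^ ν * c (2 * m + 1)) := tsum_congr hterm
    _ = (u / 2) ^ ν * ∑' m, c (2 * m + 1) := tsum_mul_left
    _ = (u / 2) ^ ν * ((∑' m, c (2 * m)) + ∑' m, c (2 * m + 1)) := by
        rw [show (∑' m, c (2 * m)) = 0 from by simp [heven], zero_add]
    _ = (u / 2) ^ ν * ∑' n, c n := by rw [tsum_even_add_odd he ho]
    _ = (u / 2) ^ ν * ∫ t in (-1:ℝ)..1, Real.exp (u * t) * t * (1 - t ^ 2) ^ p := by rw [← h0]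

end BesselAux

/-- For `α ≥ -1/2`, `|I_{α+1}(u) - I_α(u)| ≤ C u⁻¹ I_{α+1}(u)` on `(0,∞)`. -/
theorem besselI_succ_sub_le (α : ℝ) (hα : -(1/2 : ℝ) ≤ α) :
    ∃ C : ℝ, 0 < C ∧ ∀ u : ℝ, 0 < u →
      |besselI (α + 1) u - besselI α u| ≤ C * u⁻¹ * besselI (α + 1) u := by
  classical
  open BesselAux in
  set p : ℝ := α + 1/2 with hpdef
  have hp : (0:ℝ) ≤ p := by rw [hpdef]; linarith
  set B : ℝ := (4:ℝ) ^ (p + 1) with hBdef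
  have hBpos : (0:ℝ) < B := Real.rpow_pos_of_pos (by norm_num) _
  refine ⟨2 * (α + 1) + B, by nlinarith, fun u hu => ?_⟩
  have hα1 : (-1:ℝ) < α := by linarith
  have hup : (0:ℝ) < u / 2 := by linarith
  set F : ℝ := ∫ t in (-1:ℝ)..1, Real.exp (u * t) * (1 - t ^ 2) ^ p with hFd
  set F1 : ℝ := ∫ t in (-1:ℝ)..1, Real.exp (u * t) * t * (1 - t ^ 2) ^ p with hF1d
  set K : ℝ := Real.sqrt π * Real.Gamma (p + 1) with hKd
  have hKpos : 0 < K := by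
    rw [hKd]
    exact mul_pos (Real.sqrt_pos.mpr Real.pi_pos) (Real.Gamma_pos_of_pos (by linarith))
  have hXpos : (0:ℝ) < (u/2) ^ (p + 1/2) := Real.rpow_pos_of_pos hup _
  have e1 : α + 1 = p + 1/2 := by rw [hpdef]; ring
  have e2 : α + 2 = p + 1/2 + 1 := by rw [hpdef]; ring
  have hA : besselI (α + 1) u * K = (u/2) ^ (p + 1/2) * F := by
    rw [e1, hKd, hFd]; exact repA hp hu
  have hB2 : besselI (α + 2) u * K = (u/2) ^ (p + 1/2) * F1 := by
    rw [e2, hKd, hF1d]; exact repB hp hu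
  -- integrability facts
  have hcont1 : Continuous fun t : ℝ => Real.exp (u * t) * (1 - t ^ 2) ^ p :=
    (Real.continuous_exp.comp (continuous_const.mul continuous_id)).mul (wcont hp)
  have hcont2 : Continuous fun t : ℝ => Real.exp (u * t) * t * (1 - t ^ 2) ^ p :=
    ((Real.continuous_exp.comp (continuous_const.mul continuous_id)).mul continuous_id).mul
      (wcont hp)
  have hFsub : F - F1 = ∫ t in (-1:ℝ)..1, Real.exp (u * t) * (1 - t) * (1 - t ^ 2) ^ p := by
    rw [hFd, hF1d, ← intervalIntegral.integral_sub (hcont1.intervalIntegrable _ _)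
      (hcont2.intervalIntegrable _ _)]
    exact intervalIntegral.integral_congr fun t _ => by ring
  have hwnn : ∀ t : ℝ, t ∈ Set.Icc (-1:ℝ) 1 → (0:ℝ) ≤ (1 - t ^ 2) ^ p := by
    intro t ht
    obtain ⟨ht0, ht1⟩ := ht
    exact Real.rpow_nonneg (by nlinarith) _
  have h1 : 0 ≤ F - F1 := by
    rw [hFsub]
    apply intervalIntegral.integral_nonneg (by norm_num)
    intro t ht
    have := hwnn t ht
    obtain ⟨ht0, ht1⟩ := ht
    have h2 := Real.exp_pos (u * t)
    have h3 : (0:ℝ) ≤ 1 - t := by linarith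
    exact mul_nonneg (mul_nonneg h2.le h3) this
  have h2 : u * (F - F1) ≤ B * F := by
    have hstep1 : u * (F - F1)
        = ∫ t in (-1:ℝ)..1, u * (Real.exp (u * t) * (1 - t) * (1 - t ^ 2) ^ p) := by
      rw [hFsub, ← intervalIntegral.integral_const_mul]
    have hcont3 : Continuous fun t : ℝ =>
        u * (Real.exp (u * t) * (1 - t) * (1 - t ^ 2) ^ p) :=
      continuous_const.mul (((Real.continuous_exp.comp
        (continuous_const.mul continuous_id)).mul (continuous_const.sub continuous_id)).mul
        (wcont hp))
    have hcont4 : Continuous fun t : ℝ => 2 * Real.exp (u * (1 + t) / 2) * (1 - t ^ 2) ^ p :=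
      (continuous_const.mul (Real.continuous_exp.comp
        ((continuous_const.mul (continuous_const.add continuous_id)).div_const 2))).mul (wcont hp)
    have hptle : ∀ t ∈ Set.Icc (-1:ℝ) 1,
        u * (Real.exp (u * t) * (1 - t) * (1 - t ^ 2) ^ p)
          ≤ 2 * Real.exp (u * (1 + t) / 2) * (1 - t ^ 2) ^ p := by
      intro t ht
      have hw := hwnn t ht
      obtain ⟨ht0, ht1⟩ := ht
      have hkey : u * (1 - t) * Real.exp (u * t) ≤ 2 * Real.exp (u * (1 + t) / 2) := by
        have h5 : u * (1 - t) / 2 + 1 ≤ Real.exp (u * (1 - t) / 2) := Real.add_one_le_exp _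
        have h6 : u * (1 - t) ≤ 2 * Real.exp (u * (1 - t) / 2) := by linarith
        calc u * (1 - t) * Real.exp (u * t)
            ≤ 2 * Real.exp (u * (1 - t) / 2) * Real.exp (u * t) :=
              mul_le_mul_of_nonneg_right h6 (Real.exp_pos _).le
          _ = 2 * Real.exp (u * (1 + t) / 2) := by
              rw [mul_assoc, ← Real.exp_add, show u * (1 - t) / 2 + u * t = u * (1 + t) / 2
                by ring]
      calc u * (Real.exp (u * t) * (1 - t) * (1 - t ^ 2) ^ p)
          = (u * (1 - t) * Real.exp (u * t)) * (1 - t ^ 2) ^ p := by ring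
        _ ≤ (2 * Real.exp (u * (1 + t) / 2)) * (1 - t ^ 2) ^ p :=
            mul_le_mul_of_nonneg_right hkey hw
        _ = 2 * Real.exp (u * (1 + t) / 2) * (1 - t ^ 2) ^ p := by ring
    have hstep2 : (∫ t in (-1:ℝ)..1, u * (Real.exp (u * t) * (1 - t) * (1 - t ^ 2) ^ p))
        ≤ ∫ t in (-1:ℝ)..1, 2 * Real.exp (u * (1 + t) / 2) * (1 - t ^ 2) ^ p :=
      intervalIntegral.integral_mono_on (by norm_num) (hcont3.intervalIntegrable _ _)
        (hcont4.intervalIntegrable _ _) hptle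
    -- change of variables t = 2x - 1
    have hcv0 := intervalIntegral.integral_comp_mul_add (a := (0:ℝ)) (b := 1) (c := 2)
      (f := fun t => 2 * Real.exp (u * (1 + t) / 2) * (1 - t ^ 2) ^ p) two_ne_zero (-1)
    rw [show (2:ℝ) * 0 + -1 = -1 by norm_num, show (2:ℝ) * 1 + -1 = 1 by norm_num,
      smul_eq_mul] at hcv0
    have hcv1 : (∫ x in (0:ℝ)..1,
          2 * Real.exp (u * (1 + (2 * x + -1)) / 2) * (1 - (2 * x + -1) ^ 2) ^ p)
          = ∫ x in (0:ℝ)..1, 2 * Real.exp (u * x) * (1 - (2 * x - 1) ^ 2) ^ p :=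
      intervalIntegral.integral_congr fun x _ => by
        rw [show u * (1 + (2 * x + -1)) / 2 = u * x by ring,
          show (2 * x + -1 : ℝ) = 2 * x - 1 by ring]
    have hcv : (∫ t in (-1:ℝ)..1, 2 * Real.exp (u * (1 + t) / 2) * (1 - t ^ 2) ^ p)
        = 2 * ∫ x in (0:ℝ)..1, 2 * Real.exp (u * x) * (1 - (2 * x - 1) ^ 2) ^ p := by
      rw [← hcv1, hcv0]
      ring
    have hcont5 : Continuous fun x : ℝ => 2 * Real.exp (u * x) * (1 - (2 * x - 1) ^ 2) ^ p := by
      apply Continuous.mul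
      · exact continuous_const.mul (Real.continuous_exp.comp (continuous_const.mul continuous_id))
      · apply Continuous.rpow_const _ fun _ => Or.inr hp
        continuity
    have hcont6 : Continuous fun x : ℝ =>
        (2 * (4:ℝ) ^ p) * (Real.exp (u * x) * (1 - x ^ 2) ^ p) :=
      continuous_const.mul ((Real.continuous_exp.comp
        (continuous_const.mul continuous_id)).mul (wcont hp))
    have hptle2 : ∀ x ∈ Set.Icc (0:ℝ) 1,
        2 * Real.exp (u * x) * (1 - (2 * x - 1) ^ 2) ^ p
          ≤ (2 * (4:ℝ) ^ p) * (Real.exp (u * x) * (1 - x ^ 2) ^ p) := by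
      intro x hx
      obtain ⟨hx0, hx1⟩ := hx
      have hb1 : (0:ℝ) ≤ 1 - (2 * x - 1) ^ 2 := by nlinarith
      have hb2 : (1:ℝ) - (2 * x - 1) ^ 2 ≤ 4 * (1 - x ^ 2) := by nlinarith
      have hb3 : ((1:ℝ) - (2 * x - 1) ^ 2) ^ p ≤ (4 * (1 - x ^ 2)) ^ p :=
        Real.rpow_le_rpow hb1 hb2 hp
      have hb4 : ((4:ℝ) * (1 - x ^ 2)) ^ p = (4:ℝ) ^ p * (1 - x ^ 2) ^ p :=
        Real.mul_rpow (by norm_num) (by nlinarith)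
      have hexp := (Real.exp_pos (u * x)).le
      calc 2 * Real.exp (u * x) * (1 - (2 * x - 1) ^ 2) ^ p
          ≤ 2 * Real.exp (u * x) * ((4:ℝ) ^ p * (1 - x ^ 2) ^ p) := by
            apply mul_le_mul_of_nonneg_left _ (by positivity)
            rw [← hb4]; exact hb3
        _ = (2 * (4:ℝ) ^ p) * (Real.exp (u * x) * (1 - x ^ 2) ^ p) := by ring
    have hstep3 : (∫ x in (0:ℝ)..1, 2 * Real.exp (u * x) * (1 - (2 * x - 1) ^ 2) ^ p)
        ≤ ∫ x in (0:ℝ)..1, (2 * (4:ℝ) ^ p) * (Real.exp (u * x) * (1 - x ^ 2) ^ p) :=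
      intervalIntegral.integral_mono_on (by norm_num) (hcont5.intervalIntegrable _ _)
        (hcont6.intervalIntegrable _ _) hptle2
    have hstep4 : (∫ x in (0:ℝ)..1, (2 * (4:ℝ) ^ p) * (Real.exp (u * x) * (1 - x ^ 2) ^ p))
        = (2 * (4:ℝ) ^ p) * ∫ x in (0:ℝ)..1, Real.exp (u * x) * (1 - x ^ 2) ^ p :=
      intervalIntegral.integral_const_mul _ _
    have hhalf : (∫ x in (0:ℝ)..1, Real.exp (u * x) * (1 - x ^ 2) ^ p) ≤ F := by
      have hsplitF : (∫ t in (-1:ℝ)..0, Real.exp (u * t) * (1 - t ^ 2) ^ p)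
          + (∫ t in (0:ℝ)..1, Real.exp (u * t) * (1 - t ^ 2) ^ p) = F :=
        intervalIntegral.integral_add_adjacent_intervals (hcont1.intervalIntegrable _ _)
          (hcont1.intervalIntegrable _ _)
      have hnn : 0 ≤ ∫ t in (-1:ℝ)..0, Real.exp (u * t) * (1 - t ^ 2) ^ p := by
        apply intervalIntegral.integral_nonneg (by norm_num)
        intro t ht
        obtain ⟨ht0, ht1⟩ := ht
        have hw : (0:ℝ) ≤ (1 - t ^ 2) ^ p := Real.rpow_nonneg (by nlinarith) _
        have := (Real.exp_pos (u * t)).le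
        positivity
      linarith
    have hexpF : (0:ℝ) ≤ ∫ x in (0:ℝ)..1, Real.exp (u * x) * (1 - x ^ 2) ^ p := by
      apply intervalIntegral.integral_nonneg (by norm_num)
      intro t ht
      obtain ⟨ht0, ht1⟩ := ht
      have hw : (0:ℝ) ≤ (1 - t ^ 2) ^ p := Real.rpow_nonneg (by nlinarith) _
      have := (Real.exp_pos (u * t)).le
      positivity
    have hB4 : B = 4 * (4:ℝ) ^ p := by
      rw [hBdef, Real.rpow_add_one (by norm_num : (4:ℝ) ≠ 0) p]; ring
    have h4p : (0:ℝ) < (4:ℝ) ^ p := Real.rpow_pos_of_pos (by norm_num) _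
    calc u * (F - F1) ≤ 2 * ∫ x in (0:ℝ)..1, 2 * Real.exp (u * x) * (1 - (2 * x - 1) ^ 2) ^ p := by
          rw [hstep1]
          calc (∫ t in (-1:ℝ)..1, u * (Real.exp (u * t) * (1 - t) * (1 - t ^ 2) ^ p))
              ≤ ∫ t in (-1:ℝ)..1, 2 * Real.exp (u * (1 + t) / 2) * (1 - t ^ 2) ^ p := hstep2
            _ = 2 * ∫ x in (0:ℝ)..1, 2 * Real.exp (u * x) * (1 - (2 * x - 1) ^ 2) ^ p := hcv
      _ ≤ 2 * ((2 * (4:ℝ) ^ p) * ∫ x in (0:ℝ)..1, Real.exp (u * x) * (1 - x ^ 2) ^ p) := by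
          rw [← hstep4]
          exact mul_le_mul_of_nonneg_left hstep3 (by norm_num)
      _ ≤ B * F := by
          rw [hB4]
          nlinarith [hhalf, hexpF, h4p]
  -- translate to Bessel functions
  have hI1 : 0 < besselI (α + 1) u := besselI_pos (by linarith) hu
  set E : ℝ := besselI (α + 1) u - besselI (α + 2) u with hEd
  have hEK : E * K = (u/2) ^ (p + 1/2) * (F - F1) := by
    rw [hEd, sub_mul, hA, hB2]; ring
  have hE0 : 0 ≤ E := by
    have hh : 0 * K ≤ E * K := by
      rw [zero_mul, hEK]; exact mul_nonneg hXpos.le h1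
    exact le_of_mul_le_mul_right (by linarith [hh]) hKpos
  have hE2 : u * E ≤ B * besselI (α + 1) u := by
    have hh : (u * E) * K ≤ (B * besselI (α + 1) u) * K := by
      calc (u * E) * K = (u/2) ^ (p + 1/2) * (u * (F - F1)) := by
            rw [mul_assoc, hEK]; ring
        _ ≤ (u/2) ^ (p + 1/2) * (B * F) := mul_le_mul_of_nonneg_left h2 hXpos.le
        _ = B * ((u/2) ^ (p + 1/2) * F) := by ring
        _ = B * (besselI (α + 1) u * K) := by rw [hA]
        _ = (B * besselI (α + 1) u) * K := by ring
    exact le_of_mul_le_mul_right hh hKpos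
  have hrec := besselI_recurrence (s := α) hα1 hu
  set q : ℝ := u⁻¹ * besselI (α + 1) u with hqd
  have hq0 : 0 ≤ q := by positivity
  have hEq : E ≤ B * q := by
    have hh := mul_le_mul_of_nonneg_left hE2 (inv_pos.mpr hu).le
    rw [← mul_assoc, inv_mul_cancel₀ hu.ne', one_mul] at hh
    calc E ≤ u⁻¹ * (B * besselI (α + 1) u) := hh
      _ = B * q := by rw [hqd]; ring
  have hrecq : besselI α u = 2 * (α + 1) * q + besselI (α + 2) u := by
    rw [hrec, hqd, div_eq_mul_inv]; ring
  have hgoal : (2 * (α + 1) + B) * u⁻¹ * besselI (α + 1) u = (2 * (α + 1) + B) * q := by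
    rw [hqd]; ring
  rw [hgoal, abs_le]
  have h9 : 0 ≤ (α + 1) * q := mul_nonneg (by linarith) hq0
  have h10 : 0 ≤ B * q := mul_nonneg hBpos.le hq0
  have hdiff : besselI (α + 1) u - besselI α u = E - 2 * (α + 1) * q := by
    rw [hrecq, hEd]; ring
  constructor
  · rw [hdiff]; nlinarith
  · rw [hdiff]; nlinarith
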